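/- The dihedral Enneper surface of order n is minimal: for all u > 0 and v ∈ ℝ, G·e − 2F·f + E·g = 0, where E, F, G and e, f, g are the first and second fundamental forms of σⁿ; equivalently the mean curvature of σⁿ vanishes identically. -/

import Mathlib

noncomputable section
open MeasureTheory Real

/-- Dot product on `ℝ³ = ℝ × ℝ × ℝ`. -/
def dot3 (a b : ℝ × ℝ × ℝ) : ℝ := a.1 * b.1 + a.2.1 * b.2.1 + a.2.2 * b.2.2

/-- Euclidean norm on `ℝ³ = ℝ × ℝ × ℝ`. -/
def norm3 (a : ℝ × ℝ × ℝ) : ℝ := Real.sqrt (dot3 a a)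

/-- Partial derivative in the first (`u`) variable. -/
def pdU {E : Type*} [NormedAddCommGroup E] [NormedSpace ℝ E] (f : ℝ × ℝ → E) (p : ℝ × ℝ) : E :=
  deriv (fun x => f (x, p.2)) p.1

/-- Partial derivative in the second (`v`) variable. -/
def pdV {E : Type*} [NormedAddCommGroup E] [NormedSpace ℝ E] (f : ℝ × ℝ → E) (p : ℝ × ℝ) : E :=
  deriv (fun y => f (p.1, y)) p.2

/-- The dihedral Enneper parametrization `σⁿ` of order `n`. -/
def enneper (n : ℕ) (p : ℝ × ℝ) : ℝ × ℝ × ℝ :=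
  (p.1 * ((2 * (n : ℝ) + 1) * Real.cos p.2 - p.1 ^ (2 * n) * Real.cos ((2 * (n : ℝ) + 1) * p.2))
      / (4 * (n : ℝ) + 2),
   -(p.1 * ((2 * (n : ℝ) + 1) * Real.sin p.2 + p.1 ^ (2 * n) * Real.sin ((2 * (n : ℝ) + 1) * p.2)))
      / (4 * (n : ℝ) + 2),
   p.1 ^ (n + 1) * Real.cos (((n : ℝ) + 1) * p.2) / ((n : ℝ) + 1))

/-- The unit normal `ν` of the dihedral Enneper parametrization of order `n`. -/
def enneperNormal (n : ℕ) (p : ℝ × ℝ) : ℝ × ℝ × ℝ :=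
  (1 + p.1 ^ (2 * n))⁻¹ •
    (2 * p.1 ^ n * Real.cos ((n : ℝ) * p.2),
     2 * p.1 ^ n * Real.sin ((n : ℝ) * p.2),
     p.1 ^ (2 * n) - 1)

/-! ### Auxiliary derivative machinery -/

private lemma hcos (a x : ℝ) :
    HasDerivAt (fun y => Real.cos (a * y)) (-Real.sin (a * x) * a) x := by
  exact ((Real.hasDerivAt_cos (a * x)).comp x ((hasDerivAt_id x).const_mul a)).congr_deriv (by ring)

private lemma hsin (a x : ℝ) :
    HasDerivAt (fun y => Real.sin (a * y)) (Real.cos (a * x) * a) x := by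
  exact ((Real.hasDerivAt_sin (a * x)).comp x ((hasDerivAt_id x).const_mul a)).congr_deriv (by ring)

/-- `∂σ/∂u` for `n = m+1`. -/
def eUd (m : ℕ) (p : ℝ × ℝ) : ℝ × ℝ × ℝ :=
  ((Real.cos p.2 - p.1 ^ (2*m+2) * Real.cos ((2*((m:ℝ)+1)+1) * p.2)) / 2,
   -((Real.sin p.2 + p.1 ^ (2*m+2) * Real.sin ((2*((m:ℝ)+1)+1) * p.2)) / 2),
   p.1 ^ (m+1) * Real.cos (((m:ℝ)+1+1) * p.2))

/-- `∂σ/∂v` for `n = m+1`. -/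
def eVd (m : ℕ) (p : ℝ × ℝ) : ℝ × ℝ × ℝ :=
  (p.1 * (-Real.sin p.2 + p.1 ^ (2*m+2) * Real.sin ((2*((m:ℝ)+1)+1) * p.2)) / 2,
   -(p.1 * (Real.cos p.2 + p.1 ^ (2*m+2) * Real.cos ((2*((m:ℝ)+1)+1) * p.2)) / 2),
   -(p.1 ^ (m+2) * Real.sin (((m:ℝ)+1+1) * p.2)))

/-- `∂²σ/∂u²` for `n = m+1`. -/
def eUUd (m : ℕ) (p : ℝ × ℝ) : ℝ × ℝ × ℝ :=
  (-(((m:ℝ)+1) * p.1 ^ (2*m+1) * Real.cos ((2*((m:ℝ)+1)+1) * p.2)),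
   -(((m:ℝ)+1) * p.1 ^ (2*m+1) * Real.sin ((2*((m:ℝ)+1)+1) * p.2)),
   ((m:ℝ)+1) * p.1 ^ m * Real.cos (((m:ℝ)+1+1) * p.2))

/-- `∂²σ/∂u∂v` for `n = m+1`. -/
def eUVd (m : ℕ) (p : ℝ × ℝ) : ℝ × ℝ × ℝ :=
  ((-Real.sin p.2 + (2*((m:ℝ)+1)+1) * p.1 ^ (2*m+2) * Real.sin ((2*((m:ℝ)+1)+1) * p.2)) / 2,
   -((Real.cos p.2 + (2*((m:ℝ)+1)+1) * p.1 ^ (2*m+2) * Real.cos ((2*((m:ℝ)+1)+1) * p.2)) / 2),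
   -(((m:ℝ)+1+1) * p.1 ^ (m+1) * Real.sin (((m:ℝ)+1+1) * p.2)))

/-- `∂²σ/∂v²` for `n = m+1`. -/
def eVVd (m : ℕ) (p : ℝ × ℝ) : ℝ × ℝ × ℝ :=
  (p.1 * (-Real.cos p.2 + (2*((m:ℝ)+1)+1) * p.1 ^ (2*m+2) * Real.cos ((2*((m:ℝ)+1)+1) * p.2)) / 2,
   p.1 * (Real.sin p.2 + (2*((m:ℝ)+1)+1) * p.1 ^ (2*m+2) * Real.sin ((2*((m:ℝ)+1)+1) * p.2)) / 2,
   -(((m:ℝ)+1+1) * p.1 ^ (m+2) * Real.cos (((m:ℝ)+1+1) * p.2)))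

private lemma hasDU (m : ℕ) (v u : ℝ) :
    HasDerivAt (fun x => enneper (m+1) (x, v)) (eUd m (u, v)) u := by
  have e1 : 2*(m+1)-1 = 2*m+1 := by omega
  have hx : HasDerivAt
      (fun x : ℝ => x * ((2*(↑(m+1):ℝ)+1) * Real.cos v
          - x ^ (2*(m+1)) * Real.cos ((2*(↑(m+1):ℝ)+1) * v)) / (4*(↑(m+1):ℝ)+2))
      ((Real.cos v - u ^ (2*m+2) * Real.cos ((2*((m:ℝ)+1)+1) * v)) / 2) u := by
    have h := (((hasDerivAt_id u).mul
        ((hasDerivAt_const u ((2*(↑(m+1):ℝ)+1) * Real.cos v)).sub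
          ((hasDerivAt_pow (2*(m+1)) u).mul_const
            (Real.cos ((2*(↑(m+1):ℝ)+1) * v))))).div_const (4*(↑(m+1):ℝ)+2))
    rw [e1] at h
    refine h.congr_deriv ?_
    have hD : (4*((m:ℝ)+1)+2) ≠ 0 := by positivity
    push_cast
    field_simp
    simp only [id_eq, Pi.sub_apply, Pi.add_apply]
    ring
  have hy : HasDerivAt
      (fun x : ℝ => -(x * ((2*(↑(m+1):ℝ)+1) * Real.sin v
          + x ^ (2*(m+1)) * Real.sin ((2*(↑(m+1):ℝ)+1) * v))) / (4*(↑(m+1):ℝ)+2))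
      (-((Real.sin v + u ^ (2*m+2) * Real.sin ((2*((m:ℝ)+1)+1) * v)) / 2)) u := by
    have h := ((((hasDerivAt_id u).mul
        ((hasDerivAt_const u ((2*(↑(m+1):ℝ)+1) * Real.sin v)).add
          ((hasDerivAt_pow (2*(m+1)) u).mul_const
            (Real.sin ((2*(↑(m+1):ℝ)+1) * v))))).neg).div_const (4*(↑(m+1):ℝ)+2))
    rw [e1] at h
    refine h.congr_deriv ?_
    have hD : (4*((m:ℝ)+1)+2) ≠ 0 := by positivity
    push_cast
    field_simp
    simp only [id_eq, Pi.sub_apply, Pi.add_apply]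
    ring
  have hz : HasDerivAt
      (fun x : ℝ => x ^ (m+1+1) * Real.cos (((↑(m+1):ℝ)+1) * v) / ((↑(m+1):ℝ)+1))
      (u ^ (m+1) * Real.cos (((m:ℝ)+1+1) * v)) u := by
    have e2 : m+1+1-1 = m+1 := by omega
    have h := ((hasDerivAt_pow (m+1+1) u).mul_const
        (Real.cos (((↑(m+1):ℝ)+1) * v))).div_const ((↑(m+1):ℝ)+1)
    rw [e2] at h
    refine h.congr_deriv ?_
    have hN : ((m:ℝ)+1+1) ≠ 0 := by positivity
    push_cast
    field_simp
  simp only [enneper, eUd]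
  exact hx.prodMk (hy.prodMk hz)

private lemma hasDV (m : ℕ) (u v : ℝ) :
    HasDerivAt (fun y => enneper (m+1) (u, y)) (eVd m (u, v)) v := by
  have hx : HasDerivAt
      (fun y : ℝ => u * ((2*(↑(m+1):ℝ)+1) * Real.cos y
          - u ^ (2*(m+1)) * Real.cos ((2*(↑(m+1):ℝ)+1) * y)) / (4*(↑(m+1):ℝ)+2))
      (u * (-Real.sin v + u ^ (2*m+2) * Real.sin ((2*((m:ℝ)+1)+1) * v)) / 2) v := by
    have h := ((((Real.hasDerivAt_cos v).const_mul ((2*(↑(m+1):ℝ)+1))).sub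
        ((hcos ((2*(↑(m+1):ℝ)+1)) v).const_mul (u ^ (2*(m+1))))).const_mul u).div_const
        (4*(↑(m+1):ℝ)+2)
    refine h.congr_deriv ?_
    have hD : (4*((m:ℝ)+1)+2) ≠ 0 := by positivity
    push_cast
    field_simp
    ring
  have hy : HasDerivAt
      (fun y : ℝ => -(u * ((2*(↑(m+1):ℝ)+1) * Real.sin y
          + u ^ (2*(m+1)) * Real.sin ((2*(↑(m+1):ℝ)+1) * y))) / (4*(↑(m+1):ℝ)+2))
      (-(u * (Real.cos v + u ^ (2*m+2) * Real.cos ((2*((m:ℝ)+1)+1) * v)) / 2)) v := by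
    have h := (((((Real.hasDerivAt_sin v).const_mul ((2*(↑(m+1):ℝ)+1))).add
        ((hsin ((2*(↑(m+1):ℝ)+1)) v).const_mul (u ^ (2*(m+1))))).const_mul u).neg).div_const
        (4*(↑(m+1):ℝ)+2)
    refine h.congr_deriv ?_
    have hD : (4*((m:ℝ)+1)+2) ≠ 0 := by positivity
    push_cast
    field_simp
    ring
  have hz : HasDerivAt
      (fun y : ℝ => u ^ (m+1+1) * Real.cos (((↑(m+1):ℝ)+1) * y) / ((↑(m+1):ℝ)+1))
      (-(u ^ (m+2) * Real.sin (((m:ℝ)+1+1) * v))) v := by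
    have h := ((hcos ((↑(m+1):ℝ)+1) v).const_mul (u ^ (m+1+1))).div_const ((↑(m+1):ℝ)+1)
    refine h.congr_deriv ?_
    have hN : ((m:ℝ)+1+1) ≠ 0 := by positivity
    push_cast
    field_simp
  simp only [enneper, eVd]
  exact hx.prodMk (hy.prodMk hz)

private lemma hasDUU (m : ℕ) (v u : ℝ) :
    HasDerivAt (fun x => eUd m (x, v)) (eUUd m (u, v)) u := by
  have e1 : 2*m+2-1 = 2*m+1 := by omega
  have e2 : m+1-1 = m := by omega
  have hx : HasDerivAt
      (fun x : ℝ => (Real.cos v - x ^ (2*m+2) * Real.cos ((2*((m:ℝ)+1)+1) * v)) / 2)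
      (-(((m:ℝ)+1) * u ^ (2*m+1) * Real.cos ((2*((m:ℝ)+1)+1) * v))) u := by
    have h := ((hasDerivAt_const u (Real.cos v)).sub
        ((hasDerivAt_pow (2*m+2) u).mul_const (Real.cos ((2*((m:ℝ)+1)+1) * v)))).div_const 2
    rw [e1] at h
    refine h.congr_deriv ?_
    push_cast
    ring
  have hy : HasDerivAt
      (fun x : ℝ => -((Real.sin v + x ^ (2*m+2) * Real.sin ((2*((m:ℝ)+1)+1) * v)) / 2))
      (-(((m:ℝ)+1) * u ^ (2*m+1) * Real.sin ((2*((m:ℝ)+1)+1) * v))) u := by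
    have h := (((hasDerivAt_const u (Real.sin v)).add
        ((hasDerivAt_pow (2*m+2) u).mul_const (Real.sin ((2*((m:ℝ)+1)+1) * v)))).div_const 2).neg
    rw [e1] at h
    refine h.congr_deriv ?_
    push_cast
    ring
  have hz : HasDerivAt
      (fun x : ℝ => x ^ (m+1) * Real.cos (((m:ℝ)+1+1) * v))
      (((m:ℝ)+1) * u ^ m * Real.cos (((m:ℝ)+1+1) * v)) u := by
    have h := (hasDerivAt_pow (m+1) u).mul_const (Real.cos (((m:ℝ)+1+1) * v))
    rw [e2] at h
    refine h.congr_deriv ?_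
    push_cast
    ring
  simp only [eUd, eUUd]
  exact hx.prodMk (hy.prodMk hz)

private lemma hasDUV (m : ℕ) (u v : ℝ) :
    HasDerivAt (fun y => eUd m (u, y)) (eUVd m (u, v)) v := by
  have hx : HasDerivAt
      (fun y : ℝ => (Real.cos y - u ^ (2*m+2) * Real.cos ((2*((m:ℝ)+1)+1) * y)) / 2)
      ((-Real.sin v + (2*((m:ℝ)+1)+1) * u ^ (2*m+2) * Real.sin ((2*((m:ℝ)+1)+1) * v)) / 2) v := by
    have h := ((Real.hasDerivAt_cos v).sub
        ((hcos ((2*((m:ℝ)+1)+1)) v).const_mul (u ^ (2*m+2)))).div_const 2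
    refine h.congr_deriv ?_
    ring
  have hy : HasDerivAt
      (fun y : ℝ => -((Real.sin y + u ^ (2*m+2) * Real.sin ((2*((m:ℝ)+1)+1) * y)) / 2))
      (-((Real.cos v + (2*((m:ℝ)+1)+1) * u ^ (2*m+2) * Real.cos ((2*((m:ℝ)+1)+1) * v)) / 2)) v := by
    have h := (((Real.hasDerivAt_sin v).add
        ((hsin ((2*((m:ℝ)+1)+1)) v).const_mul (u ^ (2*m+2)))).div_const 2).neg
    refine h.congr_deriv ?_
    ring
  have hz : HasDerivAt
      (fun y : ℝ => u ^ (m+1) * Real.cos (((m:ℝ)+1+1) * y))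
      (-(((m:ℝ)+1+1) * u ^ (m+1) * Real.sin (((m:ℝ)+1+1) * v))) v := by
    have h := (hcos (((m:ℝ)+1+1)) v).const_mul (u ^ (m+1))
    refine h.congr_deriv ?_
    ring
  simp only [eUd, eUVd]
  exact hx.prodMk (hy.prodMk hz)

private lemma hasDVV (m : ℕ) (u v : ℝ) :
    HasDerivAt (fun y => eVd m (u, y)) (eVVd m (u, v)) v := by
  have hx : HasDerivAt
      (fun y : ℝ => u * (-Real.sin y + u ^ (2*m+2) * Real.sin ((2*((m:ℝ)+1)+1) * y)) / 2)
      (u * (-Real.cos v + (2*((m:ℝ)+1)+1) * u ^ (2*m+2) * Real.cos ((2*((m:ℝ)+1)+1) * v)) / 2) v := by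
    have h := ((((Real.hasDerivAt_sin v).neg).add
        ((hsin ((2*((m:ℝ)+1)+1)) v).const_mul (u ^ (2*m+2)))).const_mul u).div_const 2
    refine h.congr_deriv ?_
    ring
  have hy : HasDerivAt
      (fun y : ℝ => -(u * (Real.cos y + u ^ (2*m+2) * Real.cos ((2*((m:ℝ)+1)+1) * y)) / 2))
      (u * (Real.sin v + (2*((m:ℝ)+1)+1) * u ^ (2*m+2) * Real.sin ((2*((m:ℝ)+1)+1) * v)) / 2) v := by
    have h := (((((Real.hasDerivAt_cos v).add
        ((hcos ((2*((m:ℝ)+1)+1)) v).const_mul (u ^ (2*m+2)))).const_mul u).div_const 2)).neg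
    refine h.congr_deriv ?_
    ring
  have hz : HasDerivAt
      (fun y : ℝ => -(u ^ (m+2) * Real.sin (((m:ℝ)+1+1) * y)))
      (-(((m:ℝ)+1+1) * u ^ (m+2) * Real.cos (((m:ℝ)+1+1) * v))) v := by
    have h := ((hsin (((m:ℝ)+1+1)) v).const_mul (u ^ (m+2))).neg
    refine h.congr_deriv ?_
    ring
  simp only [eVd, eVVd]
  exact hx.prodMk (hy.prodMk hz)

private lemma pdU_enn (m : ℕ) : pdU (enneper (m+1)) = eUd m :=
  funext fun p => (hasDU m p.2 p.1).deriv

private lemma pdV_enn (m : ℕ) : pdV (enneper (m+1)) = eVd m :=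
  funext fun p => (hasDV m p.1 p.2).deriv

private lemma pdUU_enn (m : ℕ) : pdU (eUd m) = eUUd m :=
  funext fun p => (hasDUU m p.2 p.1).deriv

private lemma pdUV_enn (m : ℕ) : pdV (eUd m) = eUVd m :=
  funext fun p => (hasDUV m p.1 p.2).deriv

private lemma pdVV_enn (m : ℕ) : pdV (eVd m) = eVVd m :=
  funext fun p => (hasDVV m p.1 p.2).deriv

set_option maxRecDepth 10000 in
set_option maxHeartbeats 2000000 in
/-- the dihedral Enneper surface of order `n ≥ 1` is minimal:
`G·e − 2F·f + E·g = 0` for all `u > 0` and `v ∈ ℝ`, i.e. its mean curvature vanishes. -/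
theorem enneper_minimal (n : ℕ) (hn : 1 ≤ n) :
    ∀ p : ℝ × ℝ, 0 < p.1 →
      dot3 (pdV (enneper n) p) (pdV (enneper n) p)
          * dot3 (pdU (pdU (enneper n)) p) (enneperNormal n p)
        - 2 * dot3 (pdU (enneper n) p) (pdV (enneper n) p)
          * dot3 (pdV (pdU (enneper n)) p) (enneperNormal n p)
        + dot3 (pdU (enneper n) p) (pdU (enneper n) p)
          * dot3 (pdV (pdV (enneper n)) p) (enneperNormal n p) = 0 := by
  obtain ⟨m, rfl⟩ : ∃ m, n = m + 1 := ⟨n - 1, by omega⟩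
  rintro ⟨u, v⟩ hu
  simp only at hu
  rw [pdU_enn, pdV_enn, pdUU_enn, pdUV_enn, pdVV_enn]
  have hX : (0:ℝ) < 1 + u ^ (2*(m+1)) := by positivity
  simp only [eUd, eVd, eUUd, eUVd, eVVd, enneperNormal, dot3, Prod.smul_mk, smul_eq_mul]
  push_cast
  have t1 : ((m:ℝ)+1+1) * v = ((m:ℝ)+1) * v + v := by ring
  have t2 : (2*((m:ℝ)+1)+1) * v = ((m:ℝ)+1) * v + (((m:ℝ)+1) * v + v) := by ring
  rw [t1, t2]
  simp only [Real.cos_add, Real.sin_add]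
  have hC := Real.sin_sq_add_cos_sq (((m:ℝ)+1) * v)
  set C := Real.cos (((m:ℝ)+1) * v) with hCdef
  set S := Real.sin (((m:ℝ)+1) * v) with hSdef
  set c := Real.cos v with hcdef
  set s := Real.sin v with hsdef
  linear_combination ((1 + u ^ (2*(m+1)))⁻¹ * u^4*(u^m)^3*(c^2+s^2)*(C*c-S*s)*(1+u^2*(u^m)^2*(C^2+S^2))^2/4) * hC
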